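/- Let s_{k,i} denote a best tuple of monotonic bands of length k in the prefix T[i]: a minimum among the maxima of all monotonic bands of length k in T[i]. If s_{k,i} ≤ t_{i+1} + Δ (so t_{i+1} can extend a band of length k with best tuple s_{k,i}), then a best tuple of monotonic bands of length k+1 in T[i+1] equals min( s_{k+1,i}, max(s_{k,i}, t_{i+1}) ); otherwise it equals s_{k+1,i}. -/

import Mathlib

/-- A monotonic band of length `k` (given by the strictly increasing index map `f`)
in the prefix `T[i] = (t 0, …, t (i-1))` with band-width `Δ`. -/
def IsBandInPrefix (t : ℕ → ℝ) (Δ : ℝ) (i k : ℕ) (f : Fin k → ℕ) : Prop :=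
  StrictMono f ∧ (∀ a, f a < i) ∧ ∀ a b : Fin k, a < b → t (f a) - t (f b) ≤ Δ

/-- The best tuple `s_{k,i}`: the minimum, over all monotonic bands of length `k` in
the prefix `T[i]`, of the band's maximal tuple (its maximum element), valued in
`EReal` so that it is `+∞` when no band of length `k` exists and `-∞` for `k = 0`. -/
noncomputable def bestTuple (t : ℕ → ℝ) (Δ : ℝ) (k i : ℕ) : EReal :=
  sInf { m : EReal | ∃ f : Fin k → ℕ, IsBandInPrefix t Δ i k f ∧
    m = Finset.univ.sup (fun a => (t (f a) : EReal)) }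

/-- The set of maximal tuples of bands of length `k` in the prefix `T[i]`. -/
def BandSet (t : ℕ → ℝ) (Δ : ℝ) (k i : ℕ) : Set EReal :=
  { m : EReal | ∃ f : Fin k → ℕ, IsBandInPrefix t Δ i k f ∧
    m = Finset.univ.sup (fun a => (t (f a) : EReal)) }

lemma bestTuple_eq (t : ℕ → ℝ) (Δ : ℝ) (k i : ℕ) :
    bestTuple t Δ k i = sInf (BandSet t Δ k i) := rfl

lemma bandSet_finite (t : ℕ → ℝ) (Δ : ℝ) (k i : ℕ) : (BandSet t Δ k i).Finite := by
  have h1 : (Set.univ.pi fun _ : Fin k => Set.Iio i).Finite :=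
    Set.Finite.pi fun _ => Set.finite_Iio i
  have h2 : (BandSet t Δ k i) ⊆
      (fun f : Fin k → ℕ => Finset.univ.sup (fun a => (t (f a) : EReal))) ''
        (Set.univ.pi fun _ : Fin k => Set.Iio i) := by
    rintro m ⟨f, ⟨_, hlt, _⟩, rfl⟩
    exact ⟨f, fun a _ => hlt a, rfl⟩
  exact (h1.image _).subset h2

lemma bandSet_subset_succ (t : ℕ → ℝ) (Δ : ℝ) (k i : ℕ) :
    BandSet t Δ k i ⊆ BandSet t Δ k (i + 1) := by
  rintro m ⟨f, ⟨hsm, hlt, hband⟩, rfl⟩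
  exact ⟨f, ⟨hsm, fun a => Nat.lt_succ_of_lt (hlt a), hband⟩, rfl⟩

/-- Decomposition of a sup over `Fin (k+1)`. -/
lemma sup_univ_castSucc {α : Type*} [SemilatticeSup α] [OrderBot α] {k : ℕ}
    (h : Fin (k + 1) → α) :
    Finset.univ.sup h =
      (Finset.univ.sup fun a : Fin k => h a.castSucc) ⊔ h (Fin.last k) := by
  rw [Fin.univ_castSuccEmb, Finset.sup_cons, Finset.sup_map]
  exact sup_comm _ _

/-- If a band of length `k+1` in prefix `i+1` contains the index `i` (necessarily at the
last position), its restriction is a band of length `k` in prefix `i`. -/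
lemma restrict_band {t : ℕ → ℝ} {Δ : ℝ} {k i : ℕ} {g : Fin (k + 1) → ℕ}
    (hg : IsBandInPrefix t Δ (i + 1) (k + 1) g) (hlast : g (Fin.last k) = i) :
    IsBandInPrefix t Δ i k (fun a => g a.castSucc) := by
  obtain ⟨hsm, hlt, hband⟩ := hg
  refine ⟨hsm.comp Fin.strictMono_castSucc, fun a => ?_, fun a b hab => ?_⟩
  · rw [← hlast]; exact hsm (Fin.castSucc_lt_last a)
  · exact hband _ _ (by simpa using hab)

theorem stmt_3 (t : ℕ → ℝ) (Δ : ℝ) (hΔ : 0 ≤ Δ) (k i : ℕ) :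
    (bestTuple t Δ k i ≤ (t i : EReal) + (Δ : EReal) →
      bestTuple t Δ (k + 1) (i + 1) =
        min (bestTuple t Δ (k + 1) i) (max (bestTuple t Δ k i) (t i : EReal))) ∧
    (¬ bestTuple t Δ k i ≤ (t i : EReal) + (Δ : EReal) →
      bestTuple t Δ (k + 1) (i + 1) = bestTuple t Δ (k + 1) i) := by
  have hcoe : ((t i : EReal) + (Δ : EReal)) = ((t i + Δ : ℝ) : EReal) := by
    rw [EReal.coe_add]
  -- the inf is always at most the inf over the smaller prefix
  have hmono : bestTuple t Δ (k + 1) (i + 1) ≤ bestTuple t Δ (k + 1) i :=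
    sInf_le_sInf (bandSet_subset_succ t Δ (k + 1) i)
  -- lower bound: every band of length k+1 in prefix i+1 has sup at least the min
  have hlow : min (bestTuple t Δ (k + 1) i) (max (bestTuple t Δ k i) (t i : EReal)) ≤
      bestTuple t Δ (k + 1) (i + 1) := by
    rw [bestTuple_eq t Δ (k + 1) (i + 1)]
    refine le_sInf ?_
    rintro m ⟨g, hg, rfl⟩
    obtain ⟨hsm, hlt, hband⟩ := hg
    rcases lt_or_eq_of_le (Nat.lt_succ_iff.mp (hlt (Fin.last k))) with hcase | hcase
    · -- all indices < i : band in prefix i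
      refine le_trans (min_le_left _ _) (sInf_le ⟨g, ⟨hsm, fun a => ?_, hband⟩, rfl⟩)
      exact lt_of_le_of_lt (hsm.monotone (Fin.le_last a)) hcase
    · -- last index = i : restriction is band in prefix i
      have hres := restrict_band ⟨hsm, hlt, hband⟩ hcase
      have h1 : bestTuple t Δ k i ≤
          Finset.univ.sup (fun a : Fin k => (t (g a.castSucc) : EReal)) :=
        sInf_le ⟨_, hres, rfl⟩
      refine le_trans (min_le_right _ _) ?_
      rw [sup_univ_castSucc (fun a => (t (g a) : EReal)), hcase]
      exact sup_le_sup h1 le_rfl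
  constructor
  · intro h
    refine le_antisymm (le_min hmono ?_) hlow
    -- build a band of length k+1 in prefix i+1 with sup = max (bestTuple k i) (t i)
    have hne : (BandSet t Δ k i).Nonempty := by
      by_contra hempty
      rw [Set.not_nonempty_iff_eq_empty] at hempty
      rw [bestTuple_eq, hempty, sInf_empty, hcoe] at h
      exact (EReal.coe_lt_top (t i + Δ)).not_ge h
    have hmem : bestTuple t Δ k i ∈ BandSet t Δ k i :=
      hne.csInf_mem (bandSet_finite t Δ k i)
    obtain ⟨f, hf, hfeq⟩ := hmem
    obtain ⟨hsm, hlt, hband⟩ := hf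
    set g : Fin (k + 1) → ℕ := Fin.snoc f i with hgdef
    have hglast : g (Fin.last k) = i := Fin.snoc_last _ _
    have hgcast : ∀ a : Fin k, g a.castSucc = f a := fun a => Fin.snoc_castSucc _ _ _
    have hgsm : StrictMono g := by
      intro a b hab
      rcases Fin.eq_castSucc_or_eq_last b with ⟨b', rfl⟩ | rfl
      · rcases Fin.exists_castSucc_eq.mpr (Fin.ne_last_of_lt hab) with ⟨a', rfl⟩
        rw [hgcast, hgcast]
        exact hsm (Fin.castSucc_lt_castSucc_iff.mp hab)
      · rcases Fin.exists_castSucc_eq.mpr (Fin.ne_last_of_lt hab) with ⟨a', rfl⟩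
        rw [hglast, hgcast]; exact hlt a'
    have hkey : ∀ a : Fin k, t (f a) ≤ t i + Δ := by
      intro a
      have h1 : (t (f a) : EReal) ≤ bestTuple t Δ k i := by
        rw [hfeq]
        exact Finset.le_sup (f := fun a => ((t (f a) : EReal))) (Finset.mem_univ a)
      have h2 : (t (f a) : EReal) ≤ ((t i + Δ : ℝ) : EReal) := h1.trans (hcoe ▸ h)
      exact_mod_cast h2
    have hgband : IsBandInPrefix t Δ (i + 1) (k + 1) g := by
      refine ⟨hgsm, fun a => ?_, fun a b hab => ?_⟩
      · have := hgsm.monotone (Fin.le_last a)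
        rw [hglast] at this
        exact Nat.lt_succ_of_le this
      · rcases Fin.eq_castSucc_or_eq_last b with ⟨b', rfl⟩ | rfl
        · rcases Fin.exists_castSucc_eq.mpr (Fin.ne_last_of_lt hab) with ⟨a', rfl⟩
          rw [hgcast, hgcast]
          exact hband a' b' (Fin.castSucc_lt_castSucc_iff.mp hab)
        · rcases Fin.exists_castSucc_eq.mpr (Fin.ne_last_of_lt hab) with ⟨a', rfl⟩
          rw [hglast, hgcast]
          linarith [hkey a']
    have hsup : Finset.univ.sup (fun a : Fin (k + 1) => (t (g a) : EReal)) =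
        max (bestTuple t Δ k i) (t i : EReal) := by
      rw [sup_univ_castSucc (fun a => (t (g a) : EReal)), hglast, hfeq]
      congr 1
      exact Finset.sup_congr rfl (fun a _ => by rw [hgcast])
    calc bestTuple t Δ (k + 1) (i + 1) ≤
        Finset.univ.sup (fun a : Fin (k + 1) => (t (g a) : EReal)) :=
          sInf_le ⟨g, hgband, rfl⟩
      _ = max (bestTuple t Δ k i) (t i : EReal) := hsup
  · intro h
    refine le_antisymm hmono ?_
    rw [bestTuple_eq t Δ (k + 1) (i + 1)]
    refine le_sInf ?_
    rintro m ⟨g, hg, rfl⟩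
    obtain ⟨hsm, hlt, hband⟩ := hg
    rcases lt_or_eq_of_le (Nat.lt_succ_iff.mp (hlt (Fin.last k))) with hcase | hcase
    · refine sInf_le ⟨g, ⟨hsm, fun a => ?_, hband⟩, rfl⟩
      exact lt_of_le_of_lt (hsm.monotone (Fin.le_last a)) hcase
    · -- impossible: the restriction would witness bestTuple k i ≤ t i + Δ
      exfalso
      apply h
      have hres := restrict_band ⟨hsm, hlt, hband⟩ hcase
      have h1 : bestTuple t Δ k i ≤
          Finset.univ.sup (fun a : Fin k => (t (g a.castSucc) : EReal)) :=
        sInf_le ⟨_, hres, rfl⟩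
      refine h1.trans ?_
      rw [hcoe]
      refine Finset.sup_le fun a _ => ?_
      have := hband a.castSucc (Fin.last k) (Fin.castSucc_lt_last a)
      rw [hcase] at this
      exact_mod_cast (by linarith : t (g a.castSucc) ≤ t i + Δ)
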